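/- Let H be a real Hilbert space and X ⊆ H a nonempty closed convex set of diameter at most D, with P_X the metric projection onto X. Let n ≥ 1, W an n×n symmetric doubly stochastic matrix with σ₂ := the operator norm of W − (1/n)𝟙𝟙ᵀ satisfying σ₂ < 1, and ρ := 1 − (1 − σ₂)/4. Let T ≥ 1, η > 0, L ≥ 0, and for each i ∈ {1,…,n} and t ∈ {1,…,T} let f_{i,t} : H → ℝ be convex and L-Lipschitz on X; set f_t := (1/n)∑_{i=1}^n f_{i,t}. Run the algorithm: x_{i,1} = x₁ ∈ X for all i; g_{i,t} is a subgradient of f_{i,t} at x_{i,t} on X (i.e., f_{i,t}(y) ≥ f_{i,t}(x_{i,t}) + ⟨g_{i,t}, y − x_{i,t}⟩ for all y ∈ X) with ‖g_{i,t}‖ ≤ L; y_{i,t+1} = P_X(x_{i,t} − η g_{i,t}); x_{i,t+1} = y_{i,t+1} + (1/2)∑_{j=1}^n W i j (y_{j,t+1} − y_{i,t+1}). Then for every x* ∈ X: (1/n)∑_{t=1}^T ∑_{i=1}^n f_t(x_{i,t}) − ∑_{t=1}^T f_t(x*) ≤ D²/(2η) + η T L² (4√n/(1 − ρ) + 1/2).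 -/

import Mathlib

set_option synthInstance.maxHeartbeats 1000000
set_option maxHeartbeats 2000000


open scoped BigOperators RealInnerProductSpace

/-- `σ₂(W)`: the operator norm of `W − (1/n)𝟙𝟙ᵀ` acting on Euclidean `n`-space. -/
noncomputable def sigma2 {n : ℕ} (W : Matrix (Fin n) (Fin n) ℝ) : ℝ :=
  ‖(Matrix.toEuclideanCLM (𝕜 := ℝ) (W - (n : ℝ)⁻¹ • Matrix.of fun _ _ => (1 : ℝ)) :
      EuclideanSpace ℝ (Fin n) →L[ℝ] EuclideanSpace ℝ (Fin n))‖


lemma euclid_norm_sq' (n : ℕ) (u : EuclideanSpace ℝ (Fin n)) : ‖u‖ ^ 2 = ∑ i, (u i) ^ 2 := by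
  rw [EuclideanSpace.norm_eq, Real.sq_sqrt (by positivity)]
  simp [sq_abs]

-- projection decreases distances (squared) to points of X
lemma proj_dist_sq_le {H : Type*} [NormedAddCommGroup H] [InnerProductSpace ℝ H]
    {X : Set H} (hXcv : Convex ℝ X) {z p : H} (hp : p ∈ X)
    (hmin : ∀ w ∈ X, ‖p - z‖ ≤ ‖w - z‖) :
    ∀ w ∈ X, ‖p - w‖ ^ 2 ≤ ‖z - w‖ ^ 2 := by
  haveI : Nonempty X := ⟨⟨p, hp⟩⟩
  have hinf : ‖z - p‖ = ⨅ w : X, ‖z - w‖ := by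
    apply le_antisymm
    · refine le_ciInf fun w => ?_
      rw [norm_sub_rev z p, norm_sub_rev z w]
      exact hmin w w.2
    · have hbdd : BddBelow (Set.range fun w : X => ‖z - (w : H)‖) := by
        refine ⟨0, ?_⟩
        rintro r ⟨w, rfl⟩
        exact norm_nonneg _
      exact ciInf_le hbdd ⟨p, hp⟩
  have hVI := (norm_eq_iInf_iff_real_inner_le_zero hXcv hp).mp hinf
  intro w hw
  have h1 : ⟪z - p, w - p⟫ ≤ 0 := hVI w hw
  have h2 : ‖z - w‖ ^ 2 = ‖z - p‖ ^ 2 - 2 * ⟪z - p, w - p⟫ + ‖w - p‖ ^ 2 := by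
    have : z - w = (z - p) - (w - p) := by abel
    rw [this, norm_sub_sq_real]
  have h3 : ‖p - w‖ = ‖w - p‖ := norm_sub_rev _ _
  rw [h3]
  nlinarith [sq_nonneg ‖z - p‖]

-- Minkowski for ℓ² sums of norms
lemma sqrt_sum_sq_add_le {H : Type*} [NormedAddCommGroup H] [InnerProductSpace ℝ H]
    {n : ℕ} (a b : Fin n → H) :
    Real.sqrt (∑ i, ‖a i + b i‖ ^ 2) ≤
      Real.sqrt (∑ i, ‖a i‖ ^ 2) + Real.sqrt (∑ i, ‖b i‖ ^ 2) := by
  set A : PiLp 2 (fun _ : Fin n => H) := (WithLp.equiv 2 _).symm a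
  set B : PiLp 2 (fun _ : Fin n => H) := (WithLp.equiv 2 _).symm b
  have hA : ‖A‖ = Real.sqrt (∑ i, ‖a i‖ ^ 2) := by
    rw [PiLp.norm_eq_of_L2]; rfl
  have hB : ‖B‖ = Real.sqrt (∑ i, ‖b i‖ ^ 2) := by
    rw [PiLp.norm_eq_of_L2]; rfl
  have hAB : ‖A + B‖ = Real.sqrt (∑ i, ‖a i + b i‖ ^ 2) := by
    rw [PiLp.norm_eq_of_L2]; rfl
  rw [← hA, ← hB, ← hAB]
  exact norm_add_le A B

lemma opnorm_one_sub_avg {n : ℕ} (hn : 0 < n) :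
    ‖(Matrix.toEuclideanCLM (𝕜 := ℝ)
        ((1 : Matrix (Fin n) (Fin n) ℝ) - (n : ℝ)⁻¹ • Matrix.of fun _ _ => (1 : ℝ)) :
      EuclideanSpace ℝ (Fin n) →L[ℝ] EuclideanSpace ℝ (Fin n))‖ ≤ 1 := by
  set E := (1 : Matrix (Fin n) (Fin n) ℝ) - (n : ℝ)⁻¹ • Matrix.of fun _ _ => (1 : ℝ) with hE
  apply ContinuousLinearMap.opNorm_le_bound _ zero_le_one
  intro u
  rw [one_mul]
  set s : ℝ := (n : ℝ)⁻¹ * ∑ j, u j with hs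
  have happ : ∀ i, (Matrix.toEuclideanCLM (𝕜 := ℝ) E u) i = u i - s := by
    intro i
    have h0 : (Matrix.toEuclideanCLM (𝕜 := ℝ) E u) i
        = Matrix.toLin' E (fun j => u j) i := rfl
    rw [h0]
    simp only [Matrix.toLin'_apply, Matrix.mulVec, dotProduct, hE,
      Matrix.sub_apply, Matrix.one_apply, Matrix.smul_apply, Matrix.of_apply, smul_eq_mul,
      mul_one]
    have hsplit : ∀ j : Fin n, ((if i = j then (1:ℝ) else 0) - (n:ℝ)⁻¹) * u j
        = (if i = j then u j else 0) - (n:ℝ)⁻¹ * u j := fun j => by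
      by_cases h : i = j <;> simp [h] <;> ring
    rw [Finset.sum_congr rfl fun j _ => hsplit j, Finset.sum_sub_distrib,
      Finset.sum_ite_eq]
    simp [hs, Finset.mul_sum]
  have hn' : (0:ℝ) < n := by exact_mod_cast hn
  have hsum : ∑ j, u j = n * s := by
    rw [hs]; field_simp
  have hsq : ‖Matrix.toEuclideanCLM (𝕜 := ℝ) E u‖ ^ 2 ≤ ‖u‖ ^ 2 := by
    rw [euclid_norm_sq', euclid_norm_sq']
    have : ∑ i, ((Matrix.toEuclideanCLM (𝕜 := ℝ) E u) i) ^ 2 = ∑ i, (u i - s) ^ 2 :=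
      Finset.sum_congr rfl fun i _ => by rw [happ]
    rw [this]
    have hexp : ∑ i, (u i - s) ^ 2 = ∑ i, (u i) ^ 2 - 2 * s * (∑ i, u i) + n * s ^ 2 := by
      have h1 : ∀ i : Fin n, (u i - s) ^ 2 = (u i) ^ 2 - 2 * s * u i + s ^ 2 := fun i => by ring
      rw [Finset.sum_congr rfl fun i _ => h1 i, Finset.sum_add_distrib, Finset.sum_sub_distrib]
      simp only [Finset.mul_sum, Finset.sum_const, Finset.card_univ, Fintype.card_fin,
        nsmul_eq_mul]
    rw [hexp, hsum]
    nlinarith [sq_nonneg s, hn'.le]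
  have h1 := norm_nonneg (Matrix.toEuclideanCLM (𝕜 := ℝ) E u)
  have h2 := norm_nonneg u
  nlinarith

lemma matrix_op_sum_sq_le {H : Type*} [NormedAddCommGroup H] [InnerProductSpace ℝ H]
    {n : ℕ} (A : Matrix (Fin n) (Fin n) ℝ) (v : Fin n → H) :
    ∑ i, ‖∑ j, A i j • v j‖ ^ 2 ≤
      ‖(Matrix.toEuclideanCLM (𝕜 := ℝ) A :
        EuclideanSpace ℝ (Fin n) →L[ℝ] EuclideanSpace ℝ (Fin n))‖ ^ 2 * ∑ j, ‖v j‖ ^ 2 := by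
  classical
  set Φ := (Matrix.toEuclideanCLM (𝕜 := ℝ) A :
        EuclideanSpace ℝ (Fin n) →L[ℝ] EuclideanSpace ℝ (Fin n)) with hΦ
  set K := Submodule.span ℝ (Set.range v) with hK
  haveI : FiniteDimensional ℝ K := FiniteDimensional.span_of_finite ℝ (Set.finite_range v)
  set v' : Fin n → K := fun j => ⟨v j, Submodule.subset_span (Set.mem_range_self j)⟩ with hv'
  set b := stdOrthonormalBasis ℝ K with hb
  have hnorm : ∀ w : K, ‖(w : H)‖ ^ 2 = ∑ k, (b.repr w k) ^ 2 := by
    intro w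
    have h1 : ‖(w : H)‖ = ‖b.repr w‖ := by
      rw [b.repr.norm_map w]; rfl
    rw [h1, euclid_norm_sq']
  have hcoord : ∀ (i : Fin n) (k), b.repr (∑ j, A i j • v' j) k = ∑ j, A i j * b.repr (v' j) k := by
    intro i k
    rw [map_sum]
    simp only [map_smul]
    rw [WithLp.ofLp_sum, Finset.sum_apply]
    simp [smul_eq_mul]
  calc ∑ i, ‖∑ j, A i j • v j‖ ^ 2
      = ∑ i, ∑ k, (∑ j, A i j * b.repr (v' j) k) ^ 2 := by
        refine Finset.sum_congr rfl fun i _ => ?_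
        have hc : (∑ j, A i j • v j) = ((∑ j, A i j • v' j : K) : H) := by
          push_cast; rfl
        rw [hc, hnorm]
        exact Finset.sum_congr rfl fun k _ => by rw [hcoord]
    _ = ∑ k, ∑ i, (∑ j, A i j * b.repr (v' j) k) ^ 2 := Finset.sum_comm
    _ ≤ ∑ k, ‖Φ‖ ^ 2 * ∑ j, (b.repr (v' j) k) ^ 2 := by
        refine Finset.sum_le_sum fun k _ => ?_
        set u : EuclideanSpace ℝ (Fin n) := (WithLp.equiv 2 _).symm (fun j => b.repr (v' j) k) with hu
        have happ : ∀ i, (Φ u) i = ∑ j, A i j * b.repr (v' j) k := by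
          intro i
          rw [hu, hΦ, WithLp.equiv_symm_apply, Matrix.toEuclideanCLM_toLp]
          simp [Matrix.toLin'_apply, Matrix.mulVec, dotProduct]
        have h1 : ∑ i, (∑ j, A i j * b.repr (v' j) k) ^ 2 = ‖Φ u‖ ^ 2 := by
          rw [euclid_norm_sq']
          exact Finset.sum_congr rfl fun i _ => by rw [happ]
        have h2 : ‖Φ u‖ ^ 2 ≤ ‖Φ‖ ^ 2 * ‖u‖ ^ 2 := by
          have := Φ.le_opNorm u
          calc ‖Φ u‖ ^ 2 ≤ (‖Φ‖ * ‖u‖) ^ 2 := by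
                apply pow_le_pow_left₀ (norm_nonneg _) this
            _ = ‖Φ‖ ^ 2 * ‖u‖ ^ 2 := by ring
        have h3 : ‖u‖ ^ 2 = ∑ j, (b.repr (v' j) k) ^ 2 := by
          rw [euclid_norm_sq']; rfl
        rw [h1, ← h3]; exact h2
    _ = ‖Φ‖ ^ 2 * ∑ j, ‖v j‖ ^ 2 := by
        rw [← Finset.mul_sum, Finset.sum_comm]
        congr 1
        refine Finset.sum_congr rfl fun j _ => ?_
        rw [← hnorm]

noncomputable def Mmat {n : ℕ} (W : Matrix (Fin n) (Fin n) ℝ) (i j : Fin n) : ℝ :=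
  2⁻¹ * ((if i = j then (1:ℝ) else 0) + W i j)

lemma Mmat_nonneg {n : ℕ} {W : Matrix (Fin n) (Fin n) ℝ} (hnn : ∀ i j, 0 ≤ W i j) (i j : Fin n) :
    0 ≤ Mmat W i j := by
  unfold Mmat; have := hnn i j; positivity

lemma Mmat_row {n : ℕ} {W : Matrix (Fin n) (Fin n) ℝ} {i : Fin n} (hr : ∑ j, W i j = 1) :
    ∑ j, Mmat W i j = 1 := by
  unfold Mmat
  rw [← Finset.mul_sum, Finset.sum_add_distrib, hr, Finset.sum_ite_eq]
  simp
  norm_num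

lemma Mmat_col {n : ℕ} {W : Matrix (Fin n) (Fin n) ℝ} {j : Fin n} (hc : ∑ i, W i j = 1) :
    ∑ i, Mmat W i j = 1 := by
  unfold Mmat
  rw [← Finset.mul_sum, Finset.sum_add_distrib, hc, Finset.sum_ite_eq']
  simp
  norm_num

lemma Mmat_smul_sum {H : Type*} [NormedAddCommGroup H] [InnerProductSpace ℝ H]
    {n : ℕ} {W : Matrix (Fin n) (Fin n) ℝ} {i : Fin n} (hr : ∑ j, W i j = 1)
    (z : Fin n → H) :
    z i + (2:ℝ)⁻¹ • ∑ j, W i j • (z j - z i) = ∑ j, Mmat W i j • z j := by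
  have e2 : ∀ j, Mmat W i j • z j
      = (2⁻¹ * (if i = j then (1:ℝ) else 0)) • z j + (2⁻¹ * W i j) • z j := by
    intro j; rw [← add_smul]; congr 1; unfold Mmat; ring
  rw [Finset.sum_congr rfl fun j _ => e2 j, Finset.sum_add_distrib]
  have e3 : ∑ j, (2⁻¹ * (if i = j then (1:ℝ) else 0)) • z j = (2⁻¹:ℝ) • z i := by
    simp only [mul_ite, mul_one, mul_zero, ite_smul, zero_smul]
    rw [Finset.sum_ite_eq]
    simp
  have e4 : ∑ j, (2⁻¹ * W i j) • z j = (2⁻¹:ℝ) • ∑ j, W i j • z j := by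
    rw [Finset.smul_sum]
    exact Finset.sum_congr rfl fun j _ => by rw [mul_smul]
  rw [e3, e4]
  have e5 : ∑ j, W i j • (z j - z i) = (∑ j, W i j • z j) - z i := by
    simp only [smul_sub]
    rw [Finset.sum_sub_distrib, ← Finset.sum_smul, hr, one_smul]
  rw [e5, smul_sub]
  have : ((2:ℝ)⁻¹ + 2⁻¹) • z i = z i := by norm_num
  calc z i + ((2:ℝ)⁻¹ • ∑ j, W i j • z j - (2:ℝ)⁻¹ • z i)
      = (z i - (2:ℝ)⁻¹ • z i) + (2:ℝ)⁻¹ • ∑ j, W i j • z j := by abel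
    _ = (2:ℝ)⁻¹ • z i + (2:ℝ)⁻¹ • ∑ j, W i j • z j := by
        congr 1
        rw [← one_smul ℝ (z i), smul_smul, ← sub_smul]
        norm_num

lemma Mmat_sub_const {H : Type*} [NormedAddCommGroup H] [InnerProductSpace ℝ H]
    {n : ℕ} {W : Matrix (Fin n) (Fin n) ℝ} {i : Fin n} (hr : ∑ j, W i j = 1)
    (z : Fin n → H) (c : H) :
    (∑ j, Mmat W i j • z j) - c = ∑ j, Mmat W i j • (z j - c) := by
  simp only [smul_sub]
  rw [Finset.sum_sub_distrib, ← Finset.sum_smul, Mmat_row hr, one_smul]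

lemma Mmat_sub_avg {H : Type*} [NormedAddCommGroup H] [InnerProductSpace ℝ H]
    {n : ℕ} (hn : 0 < n) {W : Matrix (Fin n) (Fin n) ℝ} {i : Fin n} (hr : ∑ j, W i j = 1)
    (z : Fin n → H) (c : H) :
    (∑ j, Mmat W i j • z j) - (n:ℝ)⁻¹ • ∑ j, z j
      = ∑ j, (Mmat W i j - (n:ℝ)⁻¹) • (z j - c) := by
  have hn' : (0:ℝ) < n := by exact_mod_cast hn
  have hsum_inv : ∑ _j : Fin n, (n:ℝ)⁻¹ = 1 := by
    rw [Finset.sum_const, Finset.card_univ, Fintype.card_fin, nsmul_eq_mul]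
    field_simp
  have e : ∀ j, (Mmat W i j - (n:ℝ)⁻¹) • (z j - c)
      = (Mmat W i j • z j - (n:ℝ)⁻¹ • z j) - (Mmat W i j • c - (n:ℝ)⁻¹ • c) := by
    intro j
    rw [sub_smul, smul_sub, smul_sub]
    abel
  rw [Finset.sum_congr rfl fun j _ => e j, Finset.sum_sub_distrib, Finset.sum_sub_distrib,
    Finset.sum_sub_distrib, ← Finset.sum_smul, ← Finset.sum_smul, Mmat_row hr, hsum_inv,
    one_smul, sub_self, sub_zero, ← Finset.smul_sum]

lemma contraction_bound {n : ℕ} (hn : 0 < n) (W : Matrix (Fin n) (Fin n) ℝ) :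
    ‖(Matrix.toEuclideanCLM (𝕜 := ℝ) (Matrix.of (fun i j => Mmat W i j - (n:ℝ)⁻¹)) :
      EuclideanSpace ℝ (Fin n) →L[ℝ] EuclideanSpace ℝ (Fin n))‖ ≤ 2⁻¹ + 2⁻¹ * sigma2 W := by
  have hdecomp : (Matrix.of (fun i j => Mmat W i j - (n:ℝ)⁻¹) : Matrix (Fin n) (Fin n) ℝ)
      = (2⁻¹ : ℝ) • ((1 : Matrix (Fin n) (Fin n) ℝ) - (n : ℝ)⁻¹ • Matrix.of fun _ _ => (1 : ℝ))
        + (2⁻¹ : ℝ) • (W - (n : ℝ)⁻¹ • Matrix.of fun _ _ => (1 : ℝ)) := by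
    ext i j
    simp only [Matrix.of_apply, Matrix.add_apply, Matrix.smul_apply, Matrix.sub_apply,
      Matrix.one_apply, Matrix.smul_apply, Matrix.of_apply, smul_eq_mul, mul_one, Mmat]
    by_cases h : i = j <;> simp [h] <;> ring
  set E := (1 : Matrix (Fin n) (Fin n) ℝ) - (n : ℝ)⁻¹ • Matrix.of fun _ _ => (1 : ℝ) with hEdef
  set F := W - (n : ℝ)⁻¹ • Matrix.of fun _ _ => (1 : ℝ) with hFdef
  have hσ0 : 0 ≤ sigma2 W := norm_nonneg _
  apply ContinuousLinearMap.opNorm_le_bound _ (by positivity)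
  intro u
  have happ : Matrix.toEuclideanCLM (𝕜 := ℝ) (Matrix.of (fun i j => Mmat W i j - (n:ℝ)⁻¹)) u
      = (2⁻¹:ℝ) • (Matrix.toEuclideanCLM (𝕜 := ℝ) E u)
        + (2⁻¹:ℝ) • (Matrix.toEuclideanCLM (𝕜 := ℝ) F u) := by
    rw [hdecomp, map_add, map_smul, map_smul]
    rfl
  rw [happ]
  have h1 : ‖Matrix.toEuclideanCLM (𝕜 := ℝ) E u‖ ≤ ‖u‖ := by
    have := (Matrix.toEuclideanCLM (𝕜 := ℝ) E).le_opNorm u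
    have h2 := opnorm_one_sub_avg hn
    rw [← hEdef] at h2
    nlinarith [norm_nonneg u]
  have h2 : ‖Matrix.toEuclideanCLM (𝕜 := ℝ) F u‖ ≤ sigma2 W * ‖u‖ := by
    have := (Matrix.toEuclideanCLM (𝕜 := ℝ) F).le_opNorm u
    have hs : sigma2 W = ‖(Matrix.toEuclideanCLM (𝕜 := ℝ) F :
        EuclideanSpace ℝ (Fin n) →L[ℝ] EuclideanSpace ℝ (Fin n))‖ := rfl
    rw [hs]
    exact this
  refine (norm_add_le _ _).trans ?_
  rw [norm_smul, norm_smul]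
  have h3 : ‖(2⁻¹:ℝ)‖ = 2⁻¹ := by norm_num
  rw [h3]
  nlinarith [norm_nonneg u]

theorem stmt5 {H : Type*} [NormedAddCommGroup H] [InnerProductSpace ℝ H] [CompleteSpace H]
    (X : Set H) (hXne : X.Nonempty) (hXcl : IsClosed X) (hXcv : Convex ℝ X)
    (D : ℝ) (hdiam : ∀ a ∈ X, ∀ b ∈ X, ‖a - b‖ ≤ D)
    {n : ℕ} (hn : 1 ≤ n) (W : Matrix (Fin n) (Fin n) ℝ)
    (hsymm : W.IsSymm)
    (hnonneg : ∀ i j, 0 ≤ W i j)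
    (hrow : ∀ i, ∑ j, W i j = 1)
    (hcol : ∀ j, ∑ i, W i j = 1)
    (hσ : sigma2 W < 1)
    (ρ : ℝ) (hρ : ρ = 1 - (1 - sigma2 W) / 4)
    (T : ℕ) (hT : 1 ≤ T) (η L : ℝ) (hη : 0 < η) (hL : 0 ≤ L)
    (f : Fin n → ℕ → H → ℝ)
    (hconv : ∀ i, ∀ t ∈ Finset.Icc 1 T, ConvexOn ℝ X (f i t))
    (hlip : ∀ i, ∀ t ∈ Finset.Icc 1 T, ∀ a ∈ X, ∀ b ∈ X,
      |f i t a - f i t b| ≤ L * ‖a - b‖)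
    (x₁ : H) (hx₁ : x₁ ∈ X)
    (x y : Fin n → ℕ → H) (g : Fin n → ℕ → H)
    (hinit : ∀ i, x i 1 = x₁)
    -- `g i t` is a subgradient of `f i t` at `x i t` on `X`, of norm at most `L`
    (hsub : ∀ i, ∀ t ∈ Finset.Icc 1 T, ∀ w ∈ X,
      f i t w ≥ f i t (x i t) + ⟪g i t, w - x i t⟫)
    (hg : ∀ i, ∀ t ∈ Finset.Icc 1 T, ‖g i t‖ ≤ L)
    -- `y i (t+1)` is the metric projection of `x i t - η • g i t` onto `X`
    (hproj : ∀ i, ∀ t ∈ Finset.Icc 1 T, y i (t + 1) ∈ X ∧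
      ∀ w ∈ X, ‖y i (t + 1) - (x i t - η • g i t)‖ ≤ ‖w - (x i t - η • g i t)‖)
    (hcons : ∀ i, ∀ t ∈ Finset.Icc 1 T,
      x i (t + 1) = y i (t + 1) + (2 : ℝ)⁻¹ • ∑ j, W i j • (y j (t + 1) - y i (t + 1))) :
    ∀ xstar ∈ X,
      (n : ℝ)⁻¹ * ∑ t ∈ Finset.Icc 1 T, ∑ i, ((n : ℝ)⁻¹ * ∑ j, f j t (x i t)) -
          ∑ t ∈ Finset.Icc 1 T, ((n : ℝ)⁻¹ * ∑ j, f j t xstar) ≤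
        D ^ 2 / (2 * η) + η * T * L ^ 2 * (4 * Real.sqrt n / (1 - ρ) + 1 / 2) := by
  intro xstar hxstar
  have hσ0 : 0 ≤ sigma2 W := norm_nonneg _
  have hρ0 : 0 ≤ ρ := by rw [hρ]; linarith
  have hρ1 : ρ < 1 := by rw [hρ]; linarith
  have h1ρ : 0 < 1 - ρ := by linarith
  have hn0 : 0 < n := hn
  have hn' : (0:ℝ) < n := by exact_mod_cast hn
  have hne : (n:ℝ) ≠ 0 := ne_of_gt hn'
  have hD0 : 0 ≤ D := le_trans (norm_nonneg (x₁ - x₁)) (hdiam x₁ hx₁ x₁ hx₁)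
  set K : ℝ := 2*η*L*Real.sqrt n/(1-ρ) with hKdef
  have hK0 : 0 ≤ K := by positivity
  have hB0 : (0:ℝ) ≤ 2*η*L*Real.sqrt n := by positivity
  -- consensus in matrix form
  have hconsM : ∀ i : Fin n, ∀ t ∈ Finset.Icc 1 T,
      x i (t+1) = ∑ j, Mmat W i j • y j (t+1) := by
    intro i t ht
    rw [hcons i t ht]
    exact Mmat_smul_sum (hrow i) (fun j => y j (t+1))
  -- key invariant
  have key : ∀ t : ℕ, 1 ≤ t → t ≤ T + 1 →
      (∀ i, x i t ∈ X) ∧ ∃ c : H, Real.sqrt (∑ i, ‖x i t - c‖ ^ 2) ≤ K := by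
    intro t ht htT1
    induction t, ht using Nat.le_induction with
    | base =>
      refine ⟨fun i => by rw [hinit i]; exact hx₁, x₁, ?_⟩
      have hz : ∀ i : Fin n, ‖x i 1 - x₁‖ ^ 2 = 0 := fun i => by rw [hinit i]; simp
      rw [Finset.sum_congr rfl fun i _ => hz i]
      simpa using hK0
    | succ t ht1 IH =>
      have htT : t ∈ Finset.Icc 1 T := Finset.mem_Icc.mpr ⟨ht1, by omega⟩
      obtain ⟨hxX, c, hc⟩ := IH (by omega)
      clear htT1
      have hyX : ∀ i, y i (t+1) ∈ X := fun i => (hproj i t htT).1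
      have hyx : ∀ i : Fin n, ‖y i (t+1) - x i t‖ ≤ 2*η*L := by
        intro i
        have h1 : ‖y i (t+1) - (x i t - η • g i t)‖ ≤ ‖x i t - (x i t - η • g i t)‖ :=
          (hproj i t htT).2 _ (hxX i)
        have h2 : ‖x i t - (x i t - η • g i t)‖ = η * ‖g i t‖ := by
          rw [show x i t - (x i t - η • g i t) = η • g i t by abel, norm_smul,
            Real.norm_eq_abs, abs_of_pos hη]
        have h3 : ‖g i t‖ ≤ L := hg i t htT
        calc ‖y i (t+1) - x i t‖
            ≤ ‖y i (t+1) - (x i t - η • g i t)‖ + ‖(x i t - η • g i t) - x i t‖ := by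
              have := norm_sub_le_norm_sub_add_norm_sub (y i (t+1)) (x i t - η • g i t) (x i t)
              exact this
          _ ≤ η * ‖g i t‖ + η * ‖g i t‖ := by
              have h4 : ‖(x i t - η • g i t) - x i t‖ = η * ‖g i t‖ := by
                rw [show (x i t - η • g i t) - x i t = -(η • g i t) by abel, norm_neg,
                  norm_smul, Real.norm_eq_abs, abs_of_pos hη]
              rw [h4]
              linarith [h1, h2.le, h2.ge]
          _ ≤ 2*η*L := by nlinarith [hη.le, norm_nonneg (g i t)]
      constructor
      · intro i
        rw [hconsM i t htT]
        exact hXcv.sum_mem (fun j _ => Mmat_nonneg hnonneg i j) (Mmat_row (hrow i))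
          (fun j _ => hyX j)
      · refine ⟨(n:ℝ)⁻¹ • ∑ j, y j (t+1), ?_⟩
        have hdev : ∀ i : Fin n, x i (t+1) - (n:ℝ)⁻¹ • ∑ j, y j (t+1)
            = ∑ j, (Mmat W i j - (n:ℝ)⁻¹) • ((y j (t+1)) - c) := by
          intro i
          rw [hconsM i t htT]
          exact Mmat_sub_avg hn0 (hrow i) (fun j => y j (t+1)) c
        have hop := matrix_op_sum_sq_le (Matrix.of (fun i j => Mmat W i j - (n:ℝ)⁻¹))
          (fun j => y j (t+1) - c)
        have hΦ : ‖(Matrix.toEuclideanCLM (𝕜 := ℝ)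
            (Matrix.of (fun i j => Mmat W i j - (n:ℝ)⁻¹)) :
            EuclideanSpace ℝ (Fin n) →L[ℝ] EuclideanSpace ℝ (Fin n))‖ ≤ ρ := by
          refine (contraction_bound hn0 W).trans ?_
          rw [hρ]; linarith
        have hΦ2 : ‖(Matrix.toEuclideanCLM (𝕜 := ℝ)
            (Matrix.of (fun i j => Mmat W i j - (n:ℝ)⁻¹)) :
            EuclideanSpace ℝ (Fin n) →L[ℝ] EuclideanSpace ℝ (Fin n))‖ ^ 2 ≤ ρ ^ 2 := by
          nlinarith [norm_nonneg (Matrix.toEuclideanCLM (𝕜 := ℝ)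
            (Matrix.of (fun i j => Mmat W i j - (n:ℝ)⁻¹)) :
            EuclideanSpace ℝ (Fin n) →L[ℝ] EuclideanSpace ℝ (Fin n))]
        have hS2 : (0:ℝ) ≤ ∑ j, ‖y j (t+1) - c‖ ^ 2 := by positivity
        have hstep1 : ∑ i, ‖x i (t+1) - (n:ℝ)⁻¹ • ∑ j, y j (t+1)‖ ^ 2
            ≤ ρ^2 * ∑ j, ‖y j (t+1) - c‖ ^ 2 := by
          have e : ∑ i, ‖x i (t+1) - (n:ℝ)⁻¹ • ∑ j, y j (t+1)‖ ^ 2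
              = ∑ i, ‖∑ j, (Matrix.of (fun i j => Mmat W i j - (n:ℝ)⁻¹)) i j
                  • ((fun j => y j (t+1) - c) j)‖ ^ 2 := by
            refine Finset.sum_congr rfl fun i _ => ?_
            rw [hdev i]
            rfl
          rw [e]
          refine hop.trans ?_
          exact mul_le_mul_of_nonneg_right hΦ2 hS2
        have hstep2 : Real.sqrt (∑ j, ‖y j (t+1) - c‖ ^ 2) ≤ K + 2*η*L*Real.sqrt n := by
          have e : ∀ j : Fin n, y j (t+1) - c = (x j t - c) + (y j (t+1) - x j t) := by
            intro j; abel
          have h1 : Real.sqrt (∑ j, ‖y j (t+1) - c‖ ^ 2)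
              ≤ Real.sqrt (∑ j, ‖x j t - c‖ ^ 2)
                + Real.sqrt (∑ j, ‖y j (t+1) - x j t‖ ^ 2) := by
            have := sqrt_sum_sq_add_le (fun j => x j t - c) (fun j : Fin n => y j (t+1) - x j t)
            have e2 : ∑ j, ‖(fun j => x j t - c) j + (fun j : Fin n => y j (t+1) - x j t) j‖ ^ 2
                = ∑ j, ‖y j (t+1) - c‖ ^ 2 := by
              refine Finset.sum_congr rfl fun j _ => ?_
              rw [← e j]
            rw [e2] at this
            exact this
          have h2 : Real.sqrt (∑ j, ‖y j (t+1) - x j t‖ ^ 2) ≤ 2*η*L*Real.sqrt n := by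
            have hb : ∑ j, ‖y j (t+1) - x j t‖ ^ 2 ≤ (n:ℝ) * (2*η*L)^2 := by
              calc ∑ j, ‖y j (t+1) - x j t‖ ^ 2 ≤ ∑ _j : Fin n, (2*η*L)^2 :=
                    Finset.sum_le_sum fun j _ => by
                      have := hyx j
                      nlinarith [norm_nonneg (y j (t+1) - x j t)]
                _ = (n:ℝ) * (2*η*L)^2 := by
                    rw [Finset.sum_const, Finset.card_univ, Fintype.card_fin, nsmul_eq_mul]
            refine (Real.sqrt_le_sqrt hb).trans ?_
            rw [Real.sqrt_mul (by positivity), Real.sqrt_sq (by positivity)]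
            exact le_of_eq (by ring)
          linarith [hc]
        -- combine
        have hsq : Real.sqrt (∑ i, ‖x i (t+1) - (n:ℝ)⁻¹ • ∑ j, y j (t+1)‖ ^ 2)
            ≤ ρ * Real.sqrt (∑ j, ‖y j (t+1) - c‖ ^ 2) := by
          refine (Real.sqrt_le_sqrt hstep1).trans ?_
          rw [Real.sqrt_mul (by positivity), Real.sqrt_sq hρ0]
        have hKeq : (1-ρ)*K = 2*η*L*Real.sqrt n := by
          rw [hKdef]; field_simp
        have hfin : ρ * Real.sqrt (∑ j, ‖y j (t+1) - c‖ ^ 2) ≤ K := by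
          have h3 : ρ * Real.sqrt (∑ j, ‖y j (t+1) - c‖ ^ 2)
              ≤ ρ * (K + 2*η*L*Real.sqrt n) := by
            exact mul_le_mul_of_nonneg_left hstep2 hρ0
          nlinarith [hρ1.le, hB0]
        linarith
  -- all iterates in X
  have hxX : ∀ t ∈ Finset.Icc 1 T, ∀ i, x i t ∈ X := by
    intro t ht i
    have h := Finset.mem_Icc.mp ht
    exact (key t h.1 (by omega)).1 i
  -- pairwise deviation bound
  have hpair : ∀ t ∈ Finset.Icc 1 T, ∀ i j : Fin n, ‖x i t - x j t‖ ≤ 2*K := by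
    intro t ht i j
    have h := Finset.mem_Icc.mp ht
    obtain ⟨-, c, hc⟩ := key t h.1 (by omega)
    have hone : ∀ i' : Fin n, ‖x i' t - c‖ ≤ K := by
      intro i'
      have h1 : ‖x i' t - c‖^2 ≤ ∑ i'', ‖x i'' t - c‖^2 :=
        Finset.single_le_sum (f := fun i'' => ‖x i'' t - c‖^2) (fun _ _ => sq_nonneg _) (Finset.mem_univ i')
      have h2 : ‖x i' t - c‖ = Real.sqrt (‖x i' t - c‖^2) := (Real.sqrt_sq (norm_nonneg _)).symm
      rw [h2]
      exact (Real.sqrt_le_sqrt h1).trans hc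
    calc ‖x i t - x j t‖ ≤ ‖x i t - c‖ + ‖c - x j t‖ :=
          norm_sub_le_norm_sub_add_norm_sub _ _ _
      _ ≤ K + K := by
          have := hone j
          rw [norm_sub_rev c (x j t)]
          linarith [hone i]
      _ = 2*K := by ring
  -- distance function to xstar
  set S : ℕ → ℝ := fun t => ∑ j, ‖x j t - xstar‖^2 with hSdef
  set S' : ℕ → ℝ := fun t => ∑ j, ‖y j (t+1) - xstar‖^2 with hS'def
  -- subgradient + projection inequality
  have hsubproj : ∀ t ∈ Finset.Icc 1 T, ∀ j : Fin n,
      2*η*⟪g j t, x j t - xstar⟫ ≤ ‖x j t - xstar‖^2 - ‖y j (t+1) - xstar‖^2 + η^2*L^2 := by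
    intro t ht j
    have hpj := proj_dist_sq_le hXcv (hproj j t ht).1 ((hproj j t ht).2) xstar hxstar
    have hexp : ‖(x j t - η • g j t) - xstar‖^2
        = ‖x j t - xstar‖^2 - 2*η*⟪g j t, x j t - xstar⟫ + η^2*‖g j t‖^2 := by
      rw [show (x j t - η • g j t) - xstar = (x j t - xstar) - η • g j t by abel,
        norm_sub_sq_real, real_inner_smul_right, norm_smul, Real.norm_eq_abs, abs_of_pos hη,
        real_inner_comm (x j t - xstar) (g j t)]
      ring
    rw [hexp] at hpj
    have hgL : ‖g j t‖ ≤ L := hg j t ht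
    have h0 : ‖g j t‖^2 ≤ L^2 := by nlinarith [norm_nonneg (g j t)]
    have h1 : η^2*‖g j t‖^2 ≤ η^2*L^2 := mul_le_mul_of_nonneg_left h0 (sq_nonneg η)
    linarith
  have hip : ∀ t ∈ Finset.Icc 1 T,
      (n:ℝ)⁻¹ * ∑ j, ⟪g j t, x j t - xstar⟫ ≤ (S t - S' t)/(2*η*n) + η*L^2/2 := by
    intro t ht
    have hsum1 : 2*η*(∑ j, ⟪g j t, x j t - xstar⟫) ≤ S t - S' t + n*(η^2*L^2) := by
      have h := Finset.sum_le_sum (fun j (_ : j ∈ Finset.univ) => hsubproj t ht j)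
      rw [← Finset.mul_sum] at h
      have e : ∑ j : Fin n, (‖x j t - xstar‖^2 - ‖y j (t+1) - xstar‖^2 + η^2*L^2)
          = S t - S' t + n*(η^2*L^2) := by
        rw [Finset.sum_add_distrib, Finset.sum_sub_distrib, Finset.sum_const,
          Finset.card_univ, Fintype.card_fin, nsmul_eq_mul]
      rw [e] at h
      exact h
    have h2ηn : (0:ℝ) < 2*η*n := by positivity
    have e1 : (n:ℝ)⁻¹ * ∑ j, ⟪g j t, x j t - xstar⟫
        = (2*η*(∑ j, ⟪g j t, x j t - xstar⟫))/(2*η*n) := by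
      field_simp
    have e2 : (S t - S' t)/(2*η*n) + η*L^2/2 = (S t - S' t + n*(η^2*L^2))/(2*η*n) := by
      field_simp
    rw [e1, e2]
    gcongr
  -- per-round main bound
  have hmain : ∀ t ∈ Finset.Icc 1 T,
      (n:ℝ)⁻¹ * ∑ i, ((n:ℝ)⁻¹ * ∑ j, f j t (x i t)) - (n:ℝ)⁻¹ * ∑ j, f j t xstar
        ≤ 2*L*K + ((S t - S' t)/(2*η*n) + η*L^2/2) := by
    intro t ht
    have hfsplit : ∀ i j : Fin n, f j t (x i t) - f j t xstar
        ≤ 2*L*K + ⟪g j t, x j t - xstar⟫ := by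
      intro i j
      have h1 : f j t (x i t) - f j t (x j t) ≤ L * ‖x i t - x j t‖ :=
        le_trans (le_abs_self _) (hlip j t ht _ (hxX t ht i) _ (hxX t ht j))
      have h2 : ‖x i t - x j t‖ ≤ 2*K := hpair t ht i j
      have h3 : f j t (x j t) - f j t xstar ≤ ⟪g j t, x j t - xstar⟫ := by
        have h4 := hsub j t ht xstar hxstar
        have h5 : ⟪g j t, xstar - x j t⟫ = -⟪g j t, x j t - xstar⟫ := by
          rw [show xstar - x j t = -(x j t - xstar) by abel, inner_neg_right]
        linarith [h5.le, h5.ge]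
      have h6 : L * ‖x i t - x j t‖ ≤ L * (2*K) := mul_le_mul_of_nonneg_left h2 hL
      nlinarith
    have hrow_i : ∀ i : Fin n, ∑ j, (f j t (x i t) - f j t xstar)
        ≤ n*(2*L*K) + ∑ j, ⟪g j t, x j t - xstar⟫ := by
      intro i
      calc ∑ j, (f j t (x i t) - f j t xstar)
          ≤ ∑ j, (2*L*K + ⟪g j t, x j t - xstar⟫) :=
            Finset.sum_le_sum fun j _ => hfsplit i j
        _ = n*(2*L*K) + ∑ j, ⟪g j t, x j t - xstar⟫ := by
            rw [Finset.sum_add_distrib, Finset.sum_const, Finset.card_univ,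
              Fintype.card_fin, nsmul_eq_mul]
    have hLHSe : (n:ℝ)⁻¹ * ∑ i, ((n:ℝ)⁻¹ * ∑ j, f j t (x i t)) - (n:ℝ)⁻¹ * ∑ j, f j t xstar
        = (n:ℝ)⁻¹ * ∑ i, ((n:ℝ)⁻¹ * ∑ j, (f j t (x i t) - f j t xstar)) := by
      have e1 : ∀ i : Fin n, (n:ℝ)⁻¹ * ∑ j, (f j t (x i t) - f j t xstar)
          = (n:ℝ)⁻¹ * ∑ j, f j t (x i t) - (n:ℝ)⁻¹ * ∑ j, f j t xstar := by
        intro i; rw [Finset.sum_sub_distrib, mul_sub]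
      have e2 : ∑ i : Fin n, ((n:ℝ)⁻¹ * ∑ j, (f j t (x i t) - f j t xstar))
          = (∑ i, (n:ℝ)⁻¹ * ∑ j, f j t (x i t)) - (n:ℝ) * ((n:ℝ)⁻¹ * ∑ j, f j t xstar) := by
        rw [Finset.sum_congr rfl fun i _ => e1 i, Finset.sum_sub_distrib, Finset.sum_const,
          Finset.card_univ, Fintype.card_fin, nsmul_eq_mul]
      rw [e2, mul_sub, ← mul_assoc, inv_mul_cancel₀ hne, one_mul]
    rw [hLHSe]
    have hchain : (n:ℝ)⁻¹ * ∑ i, ((n:ℝ)⁻¹ * ∑ j, (f j t (x i t) - f j t xstar))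
        ≤ 2*L*K + (n:ℝ)⁻¹ * ∑ j, ⟪g j t, x j t - xstar⟫ := by
      have h1 : ∑ i, ((n:ℝ)⁻¹ * ∑ j, (f j t (x i t) - f j t xstar))
          ≤ ∑ _i : Fin n, ((n:ℝ)⁻¹ * (n*(2*L*K) + ∑ j, ⟪g j t, x j t - xstar⟫)) :=
        Finset.sum_le_sum fun i _ =>
          mul_le_mul_of_nonneg_left (hrow_i i) (by positivity)
      have h2 : ∑ _i : Fin n, ((n:ℝ)⁻¹ * (n*(2*L*K) + ∑ j, ⟪g j t, x j t - xstar⟫))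
          = (n:ℝ) * ((n:ℝ)⁻¹ * (n*(2*L*K) + ∑ j, ⟪g j t, x j t - xstar⟫)) := by
        rw [Finset.sum_const, Finset.card_univ, Fintype.card_fin, nsmul_eq_mul]
      have h3 := mul_le_mul_of_nonneg_left (h1.trans_eq h2)
        (by positivity : (0:ℝ) ≤ (n:ℝ)⁻¹)
      refine h3.trans_eq ?_
      field_simp
    have := hip t ht
    linarith
  -- monotonicity: averaging step does not increase distance sum
  have hmono : ∀ t ∈ Finset.Icc 1 T, S (t+1) ≤ S' t := by
    intro t ht
    have hrep : ∀ i : Fin n, x i (t+1) - xstar = ∑ j, Mmat W i j • (y j (t+1) - xstar) := by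
      intro i
      rw [hconsM i t ht]
      exact Mmat_sub_const (hrow i) (fun j => y j (t+1)) xstar
    have hsq : ∀ i : Fin n,
        ‖x i (t+1) - xstar‖^2 ≤ ∑ j, Mmat W i j * ‖y j (t+1) - xstar‖^2 := by
      intro i
      have h1 : ‖x i (t+1) - xstar‖ ≤ ∑ j, Mmat W i j * ‖y j (t+1) - xstar‖ := by
        rw [hrep i]
        refine (norm_sum_le _ _).trans ?_
        refine Finset.sum_le_sum fun j _ => ?_
        rw [norm_smul, Real.norm_eq_abs, abs_of_nonneg (Mmat_nonneg hnonneg i j)]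
      have h2 : (∑ j, Mmat W i j * ‖y j (t+1) - xstar‖)^2
          ≤ (∑ j, Mmat W i j) * ∑ j, Mmat W i j * ‖y j (t+1) - xstar‖^2 := by
        have hcs := Finset.sum_mul_sq_le_sq_mul_sq Finset.univ
          (fun j => Real.sqrt (Mmat W i j))
          (fun j => Real.sqrt (Mmat W i j) * ‖y j (t+1) - xstar‖)
        have e1 : ∀ j : Fin n,
            Real.sqrt (Mmat W i j) * (Real.sqrt (Mmat W i j) * ‖y j (t+1) - xstar‖)
            = Mmat W i j * ‖y j (t+1) - xstar‖ := fun j => by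
          rw [← mul_assoc, Real.mul_self_sqrt (Mmat_nonneg hnonneg i j)]
        have e2 : ∀ j : Fin n, Real.sqrt (Mmat W i j) ^ 2 = Mmat W i j := fun j =>
          Real.sq_sqrt (Mmat_nonneg hnonneg i j)
        have e3 : ∀ j : Fin n, (Real.sqrt (Mmat W i j) * ‖y j (t+1) - xstar‖)^2
            = Mmat W i j * ‖y j (t+1) - xstar‖^2 := fun j => by
          rw [mul_pow, e2 j]
        rw [Finset.sum_congr rfl fun j _ => e1 j, Finset.sum_congr rfl fun j _ => e2 j,
          Finset.sum_congr rfl fun j _ => e3 j] at hcs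
        exact hcs
      rw [Mmat_row (hrow i), one_mul] at h2
      nlinarith [norm_nonneg (x i (t+1) - xstar)]
    have hswap : ∑ i, ∑ j, Mmat W i j * ‖y j (t+1) - xstar‖^2
        = ∑ j : Fin n, ‖y j (t+1) - xstar‖^2 := by
      rw [Finset.sum_comm]
      refine Finset.sum_congr rfl fun j _ => ?_
      rw [← Finset.sum_mul, Mmat_col (hcol j), one_mul]
    have hfin : ∑ i : Fin n, ‖x i (t+1) - xstar‖^2
        ≤ ∑ j : Fin n, ‖y j (t+1) - xstar‖^2 := by
      calc ∑ i : Fin n, ‖x i (t+1) - xstar‖^2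
          ≤ ∑ i, ∑ j, Mmat W i j * ‖y j (t+1) - xstar‖^2 :=
            Finset.sum_le_sum fun i _ => hsq i
        _ = ∑ j : Fin n, ‖y j (t+1) - xstar‖^2 := hswap
    simpa [hSdef, hS'def] using hfin
  -- telescoping
  have htel : ∑ t ∈ Finset.Icc 1 T, (S t - S' t) ≤ (n:ℝ) * D^2 := by
    have h1 : ∑ t ∈ Finset.Icc 1 T, (S t - S' t) ≤ ∑ t ∈ Finset.Icc 1 T, (S t - S (t+1)) :=
      Finset.sum_le_sum fun t ht => by linarith [hmono t ht]
    have h2 : ∑ t ∈ Finset.Icc 1 T, (S t - S (t+1)) = S 1 - S (T+1) := by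
      rw [← Finset.Ico_add_one_right_eq_Icc, Finset.sum_Ico_eq_sum_range]
      have e : T + 1 - 1 = T := by omega
      rw [e]
      have h3 := Finset.sum_range_sub' (fun i => S (1+i)) T
      rw [show (1:ℕ)+T = T+1 from Nat.add_comm 1 T] at h3
      exact h3
    have h4 : 0 ≤ S (T+1) := by
      simp only [hSdef]
      positivity
    have h5 : S 1 ≤ (n:ℝ) * D^2 := by
      simp only [hSdef]
      calc ∑ j : Fin n, ‖x j 1 - xstar‖^2 ≤ ∑ _j : Fin n, D^2 :=
            Finset.sum_le_sum fun j _ => by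
              have := hdiam (x j 1) (by rw [hinit j]; exact hx₁) xstar hxstar
              nlinarith [norm_nonneg (x j 1 - xstar)]
        _ = (n:ℝ)*D^2 := by
            rw [Finset.sum_const, Finset.card_univ, Fintype.card_fin, nsmul_eq_mul]
    linarith
  -- final assembly
  have hsplit : (n:ℝ)⁻¹ * ∑ t ∈ Finset.Icc 1 T, ∑ i, ((n:ℝ)⁻¹ * ∑ j, f j t (x i t))
        - ∑ t ∈ Finset.Icc 1 T, ((n:ℝ)⁻¹ * ∑ j, f j t xstar)
      = ∑ t ∈ Finset.Icc 1 T, ((n:ℝ)⁻¹ * ∑ i, ((n:ℝ)⁻¹ * ∑ j, f j t (x i t))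
          - (n:ℝ)⁻¹ * ∑ j, f j t xstar) := by
    rw [Finset.mul_sum, ← Finset.sum_sub_distrib]
  rw [hsplit]
  have hsum_main : ∑ t ∈ Finset.Icc 1 T, ((n:ℝ)⁻¹ * ∑ i, ((n:ℝ)⁻¹ * ∑ j, f j t (x i t))
        - (n:ℝ)⁻¹ * ∑ j, f j t xstar)
      ≤ ∑ t ∈ Finset.Icc 1 T, (2*L*K + ((S t - S' t)/(2*η*n) + η*L^2/2)) :=
    Finset.sum_le_sum hmain
  have hre : ∑ t ∈ Finset.Icc 1 T, (2*L*K + ((S t - S' t)/(2*η*n) + η*L^2/2))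
      = (T:ℝ) * (2*L*K + η*L^2/2) + (∑ t ∈ Finset.Icc 1 T, (S t - S' t))/(2*η*n) := by
    have e : ∀ t : ℕ, 2*L*K + ((S t - S' t)/(2*η*n) + η*L^2/2)
        = (2*L*K + η*L^2/2) + (S t - S' t)/(2*η*n) := fun t => by ring
    rw [Finset.sum_congr rfl fun t _ => e t, Finset.sum_add_distrib, Finset.sum_const,
      Nat.card_Icc, Finset.sum_div]
    have ec : T + 1 - 1 = T := by omega
    rw [ec, nsmul_eq_mul]
  have hdiv : (∑ t ∈ Finset.Icc 1 T, (S t - S' t))/(2*η*n) ≤ ((n:ℝ)*D^2)/(2*η*n) := by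
    gcongr
  have hfinal : (T:ℝ) * (2*L*K + η*L^2/2) + ((n:ℝ)*D^2)/(2*η*n)
      = D^2/(2*η) + η*T*L^2*(4*Real.sqrt n/(1-ρ) + 1/2) := by
    rw [hKdef]
    field_simp
    ring
  linarith
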